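/- The number of commutative 3-nilpotent semigroup structures on a fixed set of cardinality n equals ∑_{r=1}^{n−2} S(r(r+1)/2 + 1, n−r) · n!/r!. -/

import Mathlib

open Function


/-- Stirling numbers of the second kind. -/
def stirling : ℕ → ℕ → ℕ
  | 0, 0 => 1
  | 0, _ + 1 => 0
  | _ + 1, 0 => 0
  | n + 1, k + 1 => stirling n k + (k + 1) * stirling n (k + 1)

lemma natCard_sigma {ι : Type*} [Fintype ι] (f : ι → Type*) [∀ i, Finite (f i)] :
    Nat.card (Σ i, f i) = ∑ i, Nat.card (f i) := by
  classical
  haveI := fun i => Fintype.ofFinite (f i)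
  rw [Nat.card_eq_fintype_card, Fintype.card_sigma]
  simp [Nat.card_eq_fintype_card]

lemma surj_congr {α α' β β' : Type*} (e : α ≃ α') (e' : β ≃ β') :
    Nat.card {f : α → β // Surjective f} = Nat.card {f : α' → β' // Surjective f} := by
  apply Nat.card_congr
  exact Equiv.subtypeEquiv (e.arrowCongr e') (fun f => by
    simp [Equiv.arrowCongr, EquivLike.comp_surjective, EquivLike.surjective_comp])

lemma card_surj_fin : ∀ (m : ℕ) (β : Type) [Fintype β],
    Nat.card {f : Fin m → β // Surjective f}
      = stirling m (Fintype.card β) * (Fintype.card β).factorial := by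
  intro m
  induction m with
  | zero =>
    intro β _
    rcases Nat.eq_zero_or_pos (Fintype.card β) with h | h
    · haveI : IsEmpty β := Fintype.card_eq_zero_iff.mp h
      haveI : Unique {f : Fin 0 → β // Surjective f} :=
        ⟨⟨⟨fun x => x.elim0, fun b => (IsEmpty.false b).elim⟩⟩,
          by rintro ⟨f, hf⟩; apply Subtype.ext; funext x; exact x.elim0⟩
      rw [Nat.card_unique, h]
      simp [stirling]
    · obtain ⟨k, hk⟩ := Nat.exists_eq_add_of_lt h
      haveI : Nonempty β := Fintype.card_pos_iff.mp h
      haveI : IsEmpty {f : Fin 0 → β // Surjective f} := by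
        constructor
        rintro ⟨f, hf⟩
        obtain ⟨x, -⟩ := hf (Classical.arbitrary β)
        exact x.elim0
      rw [Nat.card_of_isEmpty, hk]
      simp [stirling]
  | succ m IH =>
    intro β _
    classical
    rcases Nat.eq_zero_or_pos (Fintype.card β) with h | h
    · haveI : IsEmpty β := Fintype.card_eq_zero_iff.mp h
      haveI : IsEmpty {f : Fin (m+1) → β // Surjective f} := by
        constructor
        rintro ⟨f, -⟩
        exact IsEmpty.false (f 0)
      rw [Nat.card_of_isEmpty, h]
      simp [stirling]
    · obtain ⟨k, hk⟩ := Nat.exists_eq_add_of_lt h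
      rw [zero_add] at hk
      rw [hk]
      -- main equivalence
      have E : {f : Fin (m+1) → β // Surjective f}
          ≃ Σ b : β, {g : Fin m → β // ∀ y, y ≠ b → ∃ i, g i = y} := by
        refine ⟨fun f => ⟨f.1 (Fin.last m), ⟨Fin.init f.1, ?_⟩⟩,
                fun p => ⟨Fin.snoc p.2.1 p.1, ?_⟩, ?_, ?_⟩
        · intro y hy
          obtain ⟨j, hj⟩ := f.2 y
          rcases Fin.eq_castSucc_or_eq_last j with ⟨i, rfl⟩ | rfl
          · exact ⟨i, hj⟩
          · exact (hy hj.symm).elim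
        · intro y
          by_cases hy : y = p.1
          · exact ⟨Fin.last m, by simp [hy]⟩
          · obtain ⟨i, hi⟩ := p.2.2 y hy
            exact ⟨Fin.castSucc i, by simp [hi]⟩
        · rintro ⟨f, hf⟩
          apply Subtype.ext
          exact Fin.snoc_init_self f
        · rintro ⟨b, g, hg⟩
          exact Sigma.subtype_ext (by simp) (by simp)
      rw [Nat.card_congr E, natCard_sigma]
      -- per-fiber count
      have fiber : ∀ b : β,
          Nat.card {g : Fin m → β // ∀ y, y ≠ b → ∃ i, g i = y}
            = stirling m (k+1) * (k+1).factorial + stirling m k * k.factorial := by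
        intro b
        have split : Nat.card {g : Fin m → β // ∀ y, y ≠ b → ∃ i, g i = y}
            = Nat.card {g : Fin m → β // Surjective g}
              + Nat.card {g : Fin m → β // (∀ y, y ≠ b → ∃ i, g i = y) ∧ ¬∃ i, g i = b} := by
          rw [← Nat.card_sum]
          apply Nat.card_congr
          refine Equiv.symm (Equiv.trans (Equiv.sumCongr
            (Equiv.subtypeEquivRight (q := fun g => (∀ y, y ≠ b → ∃ i, g i = y) ∧ (∃ i, g i = b)) ?_)
            (Equiv.refl _)) ?_)
          · intro g
            constructor
            · intro hs; exact ⟨fun y _ => hs y, hs b⟩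
            · rintro ⟨hc, hb⟩ y
              by_cases hy : y = b
              · exact hy ▸ hb
              · exact hc y hy
          · refine ⟨fun x => x.elim (fun g => ⟨g.1, g.2.1⟩) (fun g => ⟨g.1, g.2.1⟩),
                    fun g => if h : ∃ i, g.1 i = b then Sum.inl ⟨g.1, g.2, h⟩
                             else Sum.inr ⟨g.1, g.2, h⟩, ?_, ?_⟩
            · rintro (⟨g, hp, hq⟩ | ⟨g, hp, hq⟩) <;> simp [hq]
            · rintro ⟨g, hp⟩
              by_cases h : ∃ i, g i = b <;> simp [h]
        rw [split, IH, hk]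
        congr 1
        have e2 : {g : Fin m → β // (∀ y, y ≠ b → ∃ i, g i = y) ∧ ¬∃ i, g i = b}
            ≃ {g' : Fin m → {y : β // y ≠ b} // Surjective g'} := by
          refine ⟨fun g => ⟨fun i => ⟨g.1 i, fun h => g.2.2 ⟨i, h⟩⟩, ?_⟩,
                  fun g' => ⟨fun i => (g'.1 i).1, ?_, ?_⟩, ?_, ?_⟩
          · rintro ⟨y, hy⟩
            obtain ⟨i, hi⟩ := g.2.1 y hy
            exact ⟨i, Subtype.ext hi⟩
          · intro y hy
            obtain ⟨i, hi⟩ := g'.2 ⟨y, hy⟩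
            exact ⟨i, congrArg Subtype.val hi⟩
          · rintro ⟨i, hi⟩
            exact (g'.1 i).2 hi
          · rintro ⟨g, hg⟩; rfl
          · rintro ⟨g', hg'⟩; rfl
        rw [Nat.card_congr e2, IH]
        have hcard : Fintype.card {y : β // y ≠ b} = k := by
          simp [Fintype.card_subtype_compl, hk]
        rw [hcard]
      simp only [fiber, Finset.sum_const, Finset.card_univ, hk, smul_eq_mul]
      show (k+1) * _ = stirling (m+1) (k+1) * (k+1).factorial
      simp only [stirling, Nat.factorial_succ]
      ring


section
variable {n : ℕ}

def backFun (A : Finset (Fin n)) (h : Sym2 {x // x ∈ A} ⊕ Unit → {x // x ∈ Aᶜ}) :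
    Fin n → Fin n → Fin n := fun x y =>
  if hxy : x ∈ A ∧ y ∈ A then (h (Sum.inl (Sym2.mk ⟨x, hxy.1⟩ ⟨y, hxy.2⟩))).1
  else (h (Sum.inr ())).1

lemma backFun_mem (A : Finset (Fin n)) (h) (x y) : backFun A h x y ∈ Aᶜ := by
  unfold backFun; split <;> exact (h _).2

lemma backFun_both (A : Finset (Fin n)) (h) {x y} (hx : x ∈ A) (hy : y ∈ A) :
    backFun A h x y = (h (Sum.inl (Sym2.mk ⟨x, hx⟩ ⟨y, hy⟩))).1 := dif_pos ⟨hx, hy⟩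

lemma backFun_left (A : Finset (Fin n)) (h) {x} (hx : x ∉ A) (y) :
    backFun A h x y = (h (Sum.inr ())).1 := dif_neg (fun c => hx c.1)

lemma backFun_right (A : Finset (Fin n)) (h) (x) {y} (hy : y ∉ A) :
    backFun A h x y = (h (Sum.inr ())).1 := dif_neg (fun c => hy c.2)

lemma backFun_comm (A : Finset (Fin n)) (h) (x y) :
    backFun A h x y = backFun A h y x := by
  by_cases hx : x ∈ A <;> by_cases hy : y ∈ A
  · rw [backFun_both A h hx hy, backFun_both A h hy hx, Sym2.eq_swap]
  · rw [backFun_right A h x hy, backFun_left A h hy x]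
  · rw [backFun_left A h hx y, backFun_right A h y hx]
  · rw [backFun_left A h hx y, backFun_left A h hy x]

lemma backFun_not_mem_val (A : Finset (Fin n)) (h : Sym2 {x // x ∈ A} ⊕ Unit → {x // x ∈ Aᶜ}) (t) : (h t).1 ∉ A :=
  Finset.mem_compl.mp (h t).2

lemma backFun_val_not_mem (A : Finset (Fin n)) (h) (x y) : backFun A h x y ∉ A :=
  Finset.mem_compl.mp (backFun_mem A h x y)

lemma backFun_mem_iff (A : Finset (Fin n)) (h : Sym2 {x // x ∈ A} ⊕ Unit → {x // x ∈ Aᶜ})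
    (hs : Surjective h) (a : Fin n) :
    a ∈ A ↔ ∀ x y, backFun A h x y ≠ a := by
  constructor
  · intro ha x y heq
    exact Finset.mem_compl.mp (heq ▸ backFun_mem A h x y) ha
  · intro hr
    by_contra ha
    obtain ⟨t, ht⟩ := hs ⟨a, Finset.mem_compl.mpr ha⟩
    match t with
    | Sum.inr () =>
      exact hr a a (by rw [backFun_left A h ha a, ht])
    | Sum.inl p =>
      induction p using Sym2.ind with
      | _ u v =>
        refine hr u.1 v.1 ?_
        rw [backFun_both A h u.2 v.2]
        show (h (Sum.inl (Sym2.mk u v))).1 = a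
        rw [ht]


/-- The structured data. -/
def USp (n : ℕ) := Σ A : {A : Finset (Fin n) // A.card ∈ Finset.Icc 1 (n-2)},
  {h : Sym2 {x // x ∈ A.1} ⊕ Unit → {x // x ∈ A.1ᶜ} // Surjective h}

def TSp (n : ℕ) := {f : Fin n → Fin n → Fin n //
      (∀ a b, f a b = f b a) ∧
      (∀ a b c, f (f a b) c = f a (f b c)) ∧
      ∃ z : Fin n, (∀ a, f a z = z ∧ f z a = z) ∧
        (∀ a b c, f (f a b) c = z) ∧ (∃ a b, f a b ≠ z)}

def Phi (u : USp n) : TSp n :=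
  ⟨backFun u.1.1 u.2.1, by
  obtain ⟨⟨A, hA⟩, h, hs⟩ := u
  refine ⟨backFun_comm A h, ?_, (h (Sum.inr ())).1, ?_, ?_, ?_⟩
  · -- assoc
    intro a b c
    rw [backFun_left A h (backFun_val_not_mem A h a b) c,
      backFun_right A h a (backFun_val_not_mem A h b c)]
  · intro a
    constructor
    · exact backFun_right A h a (backFun_not_mem_val A h _)
    · exact backFun_left A h (backFun_not_mem_val A h _) a
  · intro a b c
    exact backFun_left A h (backFun_val_not_mem A h a b) c
  · -- nonzero
    simp only [Finset.mem_Icc] at hA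
    have hcompl : 1 < Aᶜ.card := by
      rw [Finset.card_compl, Fintype.card_fin]
      omega
    obtain ⟨a, ha, b, hb, hab⟩ := Finset.one_lt_card.mp hcompl
    have key : ∃ w, w ∈ Aᶜ ∧ w ≠ (h (Sum.inr ())).1 := by
      by_cases haz : a = (h (Sum.inr ())).1
      · exact ⟨b, hb, fun hbz => hab (haz.trans hbz.symm) ⟩
      · exact ⟨a, ha, haz⟩
    obtain ⟨w, hw, hwz⟩ := key
    obtain ⟨t, ht⟩ := hs ⟨w, hw⟩
    match t with
    | Sum.inr () => exact absurd (congrArg Subtype.val ht) (Ne.symm hwz)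
    | Sum.inl p =>
      induction p using Sym2.ind with
      | _ u v =>
        refine ⟨u.1, v.1, ?_⟩
        rw [backFun_both A h u.2 v.2]
        show (h (Sum.inl (Sym2.mk u v))).1 ≠ (h (Sum.inr ())).1
        rw [ht]
        exact hwz⟩


lemma Phi_inj : Injective (Phi (n := n)) := by
  rintro ⟨⟨A1, hA1⟩, h1, hs1⟩ ⟨⟨A2, hA2⟩, h2, hs2⟩ heq
  have hfun : backFun A1 h1 = backFun A2 h2 := congrArg Subtype.val heq
  have hAeq : A1 = A2 := by
    ext a
    rw [backFun_mem_iff A1 h1 hs1 a, backFun_mem_iff A2 h2 hs2 a, hfun]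
  subst hAeq
  have hz : (h1 (Sum.inr ())).1 = (h2 (Sum.inr ())).1 := by
    have hcf := congrFun (congrFun hfun (h1 (Sum.inr ())).1) (h1 (Sum.inr ())).1
    rwa [backFun_left A1 h1 (backFun_not_mem_val A1 h1 _) _,
        backFun_left A1 h2 (backFun_not_mem_val A1 h1 _) _] at hcf
  have hh : h1 = h2 := by
    funext t
    match t with
    | Sum.inr () => exact Subtype.ext hz
    | Sum.inl p =>
      induction p using Sym2.ind with
      | _ u v =>
        apply Subtype.ext
        have hcf := congrFun (congrFun hfun u.1) v.1
        rw [backFun_both A1 h1 u.2 v.2, backFun_both A1 h2 u.2 v.2] at hcf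
        exact hcf
  cases hh
  rfl

lemma Phi_surj : Surjective (Phi (n := n)) := by
  rintro ⟨f, hcomm, hassoc, hz⟩
  obtain ⟨z, hzero, hnil, a0, b0, hne⟩ := hz
  classical
  set A : Finset (Fin n) := Finset.univ.filter (fun a => ∀ x y, f x y ≠ a) with hAdef
  have memA : ∀ a, a ∈ A ↔ ∀ x y, f x y ≠ a := by intro a; simp [hAdef]
  have notMemA : ∀ a, a ∉ A ↔ ∃ x y, f x y = a := by
    intro a; rw [memA]; push_neg; rfl
  have prod_z : ∀ x y, x ∉ A → f x y = z := by
    intro x y hx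
    obtain ⟨u, v, huv⟩ := (notMemA x).mp hx
    rw [← huv]; exact hnil u v y
  have prod_z' : ∀ x y, y ∉ A → f x y = z := by
    intro x y hy
    rw [hcomm x y]; exact prod_z y x hy
  have ha0 : a0 ∈ A := by
    by_contra h0; exact hne (prod_z a0 b0 h0)
  have hb0 : b0 ∈ A := by
    by_contra h0; exact hne (prod_z' a0 b0 h0)
  have hzA : z ∉ A := (notMemA z).mpr ⟨z, z, (hzero z).1⟩
  have hfA : ∀ x y, f x y ∉ A := fun x y => (notMemA _).mpr ⟨x, y, rfl⟩
  have hcard : A.card ∈ Finset.Icc 1 (n-2) := by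
    rw [Finset.mem_Icc]
    refine ⟨Finset.card_pos.mpr ⟨a0, ha0⟩, ?_⟩
    have hsub : ({z, f a0 b0} : Finset (Fin n)) ⊆ Aᶜ := by
      intro x hx
      simp only [Finset.mem_insert, Finset.mem_singleton] at hx
      rcases hx with rfl | rfl
      · exact Finset.mem_compl.mpr hzA
      · exact Finset.mem_compl.mpr (hfA a0 b0)
    have h2 : 2 ≤ Aᶜ.card := by
      have hle := Finset.card_le_card hsub
      rwa [Finset.card_insert_of_notMem (by simp [Ne.symm hne]),
        Finset.card_singleton] at hle
    rw [Finset.card_compl, Fintype.card_fin] at h2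
    have hAle := Finset.card_le_univ A
    rw [Fintype.card_fin] at hAle
    omega
  set h : Sym2 {x // x ∈ A} ⊕ Unit → {x // x ∈ Aᶜ} := fun t => match t with
    | Sum.inl p => Sym2.lift ⟨fun u v => ⟨f u.1 v.1, Finset.mem_compl.mpr (hfA u.1 v.1)⟩,
        fun u v => Subtype.ext (hcomm u.1 v.1)⟩ p
    | Sum.inr () => ⟨z, Finset.mem_compl.mpr hzA⟩ with hhdef
  have hsurj : Surjective h := by
    rintro ⟨c, hc⟩
    by_cases hcz : c = z
    · exact ⟨Sum.inr (), Subtype.ext hcz.symm⟩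
    · obtain ⟨x, y, hxy⟩ := (notMemA c).mp (Finset.mem_compl.mp hc)
      have hxA : x ∈ A := by
        by_contra h0; exact hcz (hxy ▸ prod_z x y h0)
      have hyA : y ∈ A := by
        by_contra h0; exact hcz (hxy ▸ prod_z' x y h0)
      exact ⟨Sum.inl (Sym2.mk ⟨x, hxA⟩ ⟨y, hyA⟩), Subtype.ext hxy⟩
  refine ⟨⟨⟨A, hcard⟩, ⟨h, hsurj⟩⟩, ?_⟩
  · apply Subtype.ext
    show backFun A h = f
    funext x y
    by_cases hx : x ∈ A
    · by_cases hy : y ∈ A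
      · rw [backFun_both A _ hx hy]; rfl
      · rw [backFun_right A _ x hy]
        exact (prod_z' x y hy).symm
    · rw [backFun_left A _ hx y]
      exact (prod_z x y hx).symm

end

lemma summand_eq {n : ℕ} (A : {A : Finset (Fin n) // A.card ∈ Finset.Icc 1 (n - 2)}) :
    Nat.card {h : Sym2 {x // x ∈ A.1} ⊕ Unit → {x // x ∈ A.1ᶜ} // Surjective h}
      = stirling (A.1.card * (A.1.card + 1) / 2 + 1) (n - A.1.card) * (n - A.1.card).factorial := by
  classical
  rw [surj_congr (Fintype.equivFin (Sym2 {x // x ∈ A.1} ⊕ Unit)) (Equiv.refl _),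
    card_surj_fin]
  have hdom : Fintype.card (Sym2 {x // x ∈ A.1} ⊕ Unit) = A.1.card * (A.1.card + 1) / 2 + 1 := by
    rw [Fintype.card_sum, Sym2.card, Fintype.card_unit, Fintype.card_coe]
    congr 1
    rw [Nat.choose_two_right, Nat.add_sub_cancel, Nat.mul_comm]
  have hcod : Fintype.card {x // x ∈ A.1ᶜ} = n - A.1.card := by
    rw [Fintype.card_coe, Finset.card_compl, Fintype.card_fin]
  rw [hdom, hcod]

/-- The number of commutative 3-nilpotent semigroup structures on a fixed
`n`-element set equals `∑_{r=1}^{n-2} S(r(r+1)/2+1, n-r) · n!/r!`. -/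
theorem stmt6 (n : ℕ) :
    Nat.card {f : Fin n → Fin n → Fin n //
      (∀ a b, f a b = f b a) ∧
      (∀ a b c, f (f a b) c = f a (f b c)) ∧
      ∃ z : Fin n, (∀ a, f a z = z ∧ f z a = z) ∧
        (∀ a b c, f (f a b) c = z) ∧ (∃ a b, f a b ≠ z)} =
    ∑ r ∈ Finset.Icc 1 (n - 2),
      stirling (r * (r + 1) / 2 + 1) (n - r) * (Nat.factorial n / Nat.factorial r) := by
  classical
  show Nat.card (TSp n) = _
  rw [← Nat.card_congr (Equiv.ofBijective (Phi (n := n)) ⟨Phi_inj, Phi_surj⟩)]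
  have h2 : Nat.card (USp n) = ∑ A : {A : Finset (Fin n) // A.card ∈ Finset.Icc 1 (n - 2)},
      Nat.card {h : Sym2 {x // x ∈ A.1} ⊕ Unit → {x // x ∈ A.1ᶜ} // Surjective h} :=
    natCard_sigma _
  rw [h2, Finset.sum_congr rfl (fun A _ => summand_eq A)]
  rw [← Finset.sum_subtype (p := fun B : Finset (Fin n) => B.card ∈ Finset.Icc 1 (n - 2))
      (f := fun B => stirling (B.card * (B.card + 1) / 2 + 1) (n - B.card) * (n - B.card).factorial)
      (Finset.univ.filter (fun B : Finset (Fin n) => B.card ∈ Finset.Icc 1 (n - 2)))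
      (fun x => by simp)]
  rw [← Finset.sum_fiberwise_eq_sum_filter' Finset.univ (Finset.Icc 1 (n - 2))
    Finset.card (fun r => stirling (r * (r + 1) / 2 + 1) (n - r) * (n - r).factorial)]
  apply Finset.sum_congr rfl
  intro r hr
  rw [Finset.sum_const, Finset.univ_filter_card_eq, Finset.card_powersetCard,
    Finset.card_univ, Fintype.card_fin, smul_eq_mul]
  have hrn : r ≤ n := by
    rw [Finset.mem_Icc] at hr
    omega
  have hfac : Nat.choose n r * (n - r).factorial = n.factorial / r.factorial := by
    rw [← Nat.choose_mul_factorial_mul_factorial hrn, mul_right_comm,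
      Nat.mul_div_cancel _ (Nat.factorial_pos r)]
  rw [← hfac]
  ring
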